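/- Let L ∈ ℝ^{N×N} be the Laplacian matrix of a strongly connected weighted directed graph. Then there exists a vector μ ∈ ℝ^N with μ_i > 0 for all i = 1,…,N such that μ^⊤ L = 0, i.e., μ is a left eigenvector of L associated with the eigenvalue zero whose entries are all positive. -/

import Mathlib

open Finset

/-- In the weighted directed graph with weights `a` (an edge from node `j` to
node `i` whenever `a i j > 0`), node `j` is reachable from node `i`. -/
def Reachable {N : ℕ} (a : Fin N → Fin N → ℝ) : Fin N → Fin N → Prop :=
  Relation.ReflTransGen (fun u v => 0 < a v u)

/-- The Laplacian matrix of the weighted directed graph with weights `a`: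
`[L]ᵢⱼ = −aᵢⱼ` for `i ≠ j` and `[L]ᵢᵢ = ∑_{ℓ≠i} aᵢℓ`. -/
def lap {N : ℕ} (a : Fin N → Fin N → ℝ) : Matrix (Fin N) (Fin N) ℝ :=
  Matrix.of fun i j =>
    if i = j then ∑ ℓ ∈ Finset.univ.erase i, a i ℓ else -(a i j)

/-- The Laplacian matrix of a strongly connected weighted directed graph has a
left eigenvector, associated with the eigenvalue zero, all of whose entries
are positive. -/
theorem exists_positive_left_kernel_vector_of_strongly_connected
    (N : ℕ) (hN : 0 < N)
    (a : Fin N → Fin N → ℝ)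
    (ha : ∀ i j : Fin N, i ≠ j → 0 ≤ a i j)
    (hsc : ∀ i j : Fin N, Reachable a i j) :
    ∃ μ : Fin N → ℝ, (∀ i, 0 < μ i) ∧ ∀ j : Fin N, ∑ i, μ i * lap a i j = 0 := by
  classical
  have : NeZero N := ⟨hN.ne'⟩
  -- row sums are zero
  have hrow : ∀ i, ∑ j, lap a i j = 0 := by
    intro i
    rw [← Finset.add_sum_erase _ _ (mem_univ i)]
    have h1 : lap a i i = ∑ ℓ ∈ Finset.univ.erase i, a i ℓ := by simp [lap]
    have h2 : ∀ j ∈ Finset.univ.erase i, lap a i j = -(a i j) := by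
      intro j hj
      have : i ≠ j := (Finset.ne_of_mem_erase hj).symm
      simp [lap, this]
    rw [h1, Finset.sum_congr rfl h2, Finset.sum_neg_distrib]
    ring
  -- splitting a left-product at index j
  have hsplit : ∀ (w : Fin N → ℝ) (j : Fin N), ∑ i, w i * lap a i j
      = w j * lap a j j - ∑ i ∈ Finset.univ.erase j, w i * a i j := by
    intro w j
    rw [← Finset.add_sum_erase _ _ (mem_univ j)]
    congr 1
    rw [← Finset.sum_neg_distrib]
    apply Finset.sum_congr rfl
    intro i hi
    have : i ≠ j := Finset.ne_of_mem_erase hi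
    simp [lap, this]
  -- det L = 0
  have hdet : (lap a).det = 0 := by
    have hmv : (lap a).mulVec (fun _ => (1:ℝ)) = 0 := by
      funext i
      simp only [Matrix.mulVec, dotProduct, mul_one, Pi.zero_apply]
      exact hrow i
    by_contra hd
    have := Matrix.eq_zero_of_mulVec_eq_zero hd hmv
    have h1 : (fun _ => (1:ℝ)) (⟨0, hN⟩ : Fin N) = 0 := by rw [this]; rfl
    simp at h1
  have hdetT : (lap a).transpose.det = 0 := by rwa [Matrix.det_transpose]
  obtain ⟨μ, hμne, hμ⟩ := (Matrix.exists_mulVec_eq_zero_iff).2 hdetT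
  -- μᵀ L = 0 pointwise
  have hker : ∀ j, ∑ i, μ i * lap a i j = 0 := by
    intro j
    have := congrFun hμ j
    simpa [Matrix.mulVec, dotProduct, Matrix.transpose_apply, mul_comm]
      using this
  set ν : Fin N → ℝ := fun i => |μ i| with hν
  have hν0 : ∀ i, 0 ≤ ν i := fun i => abs_nonneg _
  -- diagonal entries nonneg
  have hd : ∀ j, 0 ≤ lap a j j := by
    intro j
    simp only [lap, Matrix.of_apply, if_pos rfl]
    exact Finset.sum_nonneg fun ℓ hℓ => ha j ℓ (Finset.ne_of_mem_erase hℓ).symm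
  -- νᵀL ≤ 0 entrywise
  have hSle : ∀ j, ∑ i, ν i * lap a i j ≤ 0 := by
    intro j
    have hks := hker j
    rw [hsplit μ j] at hks
    have heq : μ j * lap a j j = ∑ i ∈ Finset.univ.erase j, μ i * a i j := by
      linarith
    rw [hsplit ν j]
    have h1 : ν j * lap a j j = |μ j * lap a j j| := by
      rw [abs_mul, abs_of_nonneg (hd j)]
    have h2 : |μ j * lap a j j| ≤ ∑ i ∈ Finset.univ.erase j, ν i * a i j := by
      rw [heq]
      refine (Finset.abs_sum_le_sum_abs _ _).trans ?_
      apply Finset.sum_le_sum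
      intro i hi
      rw [abs_mul, abs_of_nonneg (ha i j (Finset.ne_of_mem_erase hi))]
    rw [h1] at *
    linarith
  -- total sum of νᵀL over columns is zero
  have hStot : ∑ j, ∑ i, ν i * lap a i j = 0 := by
    rw [Finset.sum_comm]
    apply Finset.sum_eq_zero
    intro i _
    rw [← Finset.mul_sum, hrow i, mul_zero]
  -- hence νᵀL = 0 entrywise
  have hS0 : ∀ j, ∑ i, ν i * lap a i j = 0 := by
    by_contra h
    push_neg at h
    obtain ⟨j, hj⟩ := h
    have hjlt : ∑ i, ν i * lap a i j < 0 := lt_of_le_of_ne (hSle j) hj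
    have hrest : ∑ j' ∈ Finset.univ.erase j, ∑ i, ν i * lap a i j' ≤ 0 :=
      Finset.sum_nonpos fun j' _ => hSle j'
    rw [← Finset.add_sum_erase _ _ (mem_univ j)] at hStot
    linarith
  -- zero-propagation along edges
  have hprop : ∀ j i, ν j = 0 → 0 < a i j → ν i = 0 := by
    intro j i hj hij
    by_cases hije : i = j
    · rw [hije]; exact hj
    have hs := hS0 j
    rw [hsplit ν j, hj, zero_mul, zero_sub, neg_eq_zero] at hs
    have hall := (Finset.sum_eq_zero_iff_of_nonneg (fun i hi =>
      mul_nonneg (hν0 i) (ha i j (Finset.ne_of_mem_erase hi)))).1 hs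
    have hterm := hall i (Finset.mem_erase.2 ⟨hije, mem_univ i⟩)
    rcases mul_eq_zero.1 hterm with h | h
    · exact h
    · exact absurd h hij.ne'
  -- some entry of ν is positive
  obtain ⟨k, hk⟩ : ∃ k, μ k ≠ 0 := Function.ne_iff.1 hμne
  have hkpos : 0 < ν k := abs_pos.2 hk
  -- positivity propagates backwards along edges via reachability
  have hpos : ∀ i, 0 < ν i := by
    intro i
    have hreach : Relation.ReflTransGen (fun u v => 0 < a v u) i k := hsc i k
    induction hreach using Relation.ReflTransGen.head_induction_on with
    | refl => exact hkpos
    | head hxy _ ih =>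
      rename_i x y _
      rcases lt_or_eq_of_le (hν0 x) with h | h
      · exact h
      · exact absurd (hprop x y h.symm hxy) ih.ne'
  exact ⟨ν, hpos, hS0⟩
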